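/- For every integer n ≥ 2: 4·tot_n(212) = (n−2)(3^(n−3) − 1) and 4·tot_n(312) = (n−5)·3^(n−3) + n − 1 (both products interpreted as real equalities; for n = 2 both totals are 0). -/

import Mathlib

open scoped BigOperators

/-- `w` is a Catalan word: it is nonempty, starts with `1`, and each subsequent
letter lies between `1` and the previous letter plus one. -/
def IsCatalan (w : List ℕ) : Prop :=
  w ≠ [] ∧ w.getD 0 0 = 1 ∧
    ∀ i, i + 1 < w.length →
      1 ≤ w.getD (i + 1) 0 ∧ w.getD (i + 1) 0 ≤ w.getD i 0 + 1

/-- `i` is the starting index of a maximal weakly increasing run of `w`. -/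
def RunStart (w : List ℕ) (i : ℕ) : Prop :=
  i < w.length ∧ (i = 0 ∨ w.getD i 0 < w.getD (i - 1) 0)

/-- `w` is flattened: the first letters of its increasing runs, read left to
right, form a weakly nondecreasing sequence. -/
def IsFlattened (w : List ℕ) : Prop :=
  ∀ i j, RunStart w i → RunStart w j → i ≤ j → w.getD i 0 ≤ w.getD j 0

/-- The set of flattened Catalan words of length `n`. -/
def FlatCat (n : ℕ) : Set (List ℕ) :=
  {w | w.length = n ∧ IsCatalan w ∧ IsFlattened w}

/-- `i` is the starting index of an occurrence of the consecutive pattern `τ`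
in the word `w`, i.e. the factor of `w` of length `|τ|` starting at `i` is
order-isomorphic to `τ`. -/
def OccAt (τ w : List ℕ) (i : ℕ) : Prop :=
  i + τ.length ≤ w.length ∧
    ∀ s < τ.length, ∀ t < τ.length,
      (w.getD (i + s) 0 < w.getD (i + t) 0 ↔ τ.getD s 0 < τ.getD t 0)

/-- The number of occurrences of the consecutive pattern `τ` in `w`. -/
noncomputable def numOcc (τ w : List ℕ) : ℕ :=
  Set.ncard {i | OccAt τ w i}

/-- The number of distinct letters in the terminal (rightmost) increasing run
of `w`, i.e. in the longest weakly increasing suffix of `w`. -/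
noncomputable def trun (w : List ℕ) : ℕ :=
  ((w.drop (sInf {i | List.Chain' (· ≤ ·) (w.drop i)})).toFinset).card

/-- The total number of occurrences of the consecutive pattern `τ` over all
flattened Catalan words of length `n`. -/
noncomputable def tot (n : ℕ) (τ : List ℕ) : ℕ :=
  ∑ᶠ w ∈ FlatCat n, numOcc τ w

-- auxiliary defs
def stp (p : ℕ × ℕ) (x : ℕ) : ℕ × ℕ := if p.1 ≤ x then (x, p.2) else (x, x)

def st (w : List ℕ) : ℕ × ℕ := w.foldl stp (0, 1)

def lv (w : List ℕ) : ℕ := (st w).1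
def la (w : List ℕ) : ℕ := (st w).2
def dd (w : List ℕ) : ℕ := lv w - la w
def bb (w : List ℕ) : ℕ := w.getD (w.length - 2) 0

def exts (w : List ℕ) : Finset ℕ := Finset.Icc (la w) (lv w + 1)

def FC : ℕ → Finset (List ℕ)
  | 0 => ∅
  | 1 => {[1]}
  | (n+2) => (FC (n+1)).biUnion (fun w => (exts w).image (fun x => w ++ [x]))

lemma FC_succ (n : ℕ) (hn : 1 ≤ n) :
    FC (n+1) = (FC n).biUnion (fun w => (exts w).image (fun x => w ++ [x])) := by
  match n, hn with
  | (k+1), _ => rfl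

lemma st_concat (w : List ℕ) (x : ℕ) : st (w ++ [x]) = stp (st w) x := by
  simp [st, List.foldl_append]

lemma lv_concat (w : List ℕ) (x : ℕ) : lv (w ++ [x]) = x := by
  simp only [lv, st_concat, stp]
  split <;> rfl

lemma la_concat_ge (w : List ℕ) (x : ℕ) (h : lv w ≤ x) : la (w ++ [x]) = la w := by
  simp only [la, st_concat, stp, lv] at *
  rw [if_pos h]

lemma la_concat_lt (w : List ℕ) (x : ℕ) (h : x < lv w) : la (w ++ [x]) = x := by
  simp only [la, st_concat, stp, lv] at *
  rw [if_neg (by omega)]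

lemma getD_concat_lt (w : List ℕ) (x : ℕ) (j : ℕ) (h : j < w.length) :
    (w ++ [x]).getD j 0 = w.getD j 0 := List.getD_append w [x] 0 j h

lemma getD_concat_self (w : List ℕ) (x : ℕ) :
    (w ++ [x]).getD w.length 0 = x := by
  rw [List.getD_append_right w [x] 0 w.length le_rfl]
  simp

lemma bb_concat (w : List ℕ) (x : ℕ) (hw : 1 ≤ w.length) :
    bb (w ++ [x]) = w.getD (w.length - 1) 0 := by
  have : (w ++ [x]).length - 2 = w.length - 1 := by simp
  rw [bb, this, getD_concat_lt w x _ (by omega)]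
def MaxRS (w : List ℕ) : Prop :=
  ∃ i₀, RunStart w i₀ ∧ w.getD i₀ 0 = la w ∧ ∀ i, RunStart w i → i ≤ i₀

lemma st_one : st [1] = (1, 1) := by decide

lemma FC_inv : ∀ n, 1 ≤ n → ∀ w ∈ FC n, w.length = n ∧ 1 ≤ la w ∧ la w ≤ lv w ∧
    lv w = w.getD (n-1) 0 ∧ (lv w < bb w → la w = lv w) ∧ MaxRS w := by
  intro n
  induction n with
  | zero => omega
  | succ n ih =>
    intro _ w hw
    rcases Nat.eq_or_lt_of_le (Nat.one_le_iff_ne_zero.mpr (by omega : n + 1 ≠ 0)) with h1 | h1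
    · -- n + 1 = 1
      have hn0 : n = 0 := by omega
      subst hn0
      have : w = [1] := by simpa [FC] using hw
      subst this
      refine ⟨rfl, ?_, ?_, ?_, ?_, ⟨0, ⟨by norm_num, Or.inl rfl⟩, ?_, ?_⟩⟩
      · simp [la, st_one]
      · simp [la, lv, st_one]
      · simp [lv, st_one]
      · simp [lv, la, st_one]
      · simp [la, st_one]
      · intro i hi
        have := hi.1
        simp at this
        omega
    · -- n ≥ 1
      have hn1 : 1 ≤ n := by omega
      rw [FC_succ n hn1] at hw
      simp only [Finset.mem_biUnion, Finset.mem_image] at hw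
      obtain ⟨u, hu, x, hx, rfl⟩ := hw
      obtain ⟨hlen, hla1, hlav, hlvD, hdesc, i₀, hrs, hgd, hmax⟩ := ih hn1 u hu
      simp only [exts, Finset.mem_Icc] at hx
      have hul : 1 ≤ u.length := by omega
      have hbb : bb (u ++ [x]) = lv u := by
        rw [bb_concat u x hul, hlen, ← hlvD]
      have hlv' : lv (u ++ [x]) = x := lv_concat u x
      have hgdn : (u ++ [x]).getD (n + 1 - 1) 0 = x := by
        have : n + 1 - 1 = u.length := by omega
        rw [this, getD_concat_self]
      refine ⟨by simp [hlen], ?_, ?_, by rw [hlv', hgdn], ?_, ?_⟩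
      · rcases le_or_gt (lv u) x with h | h
        · rw [la_concat_ge u x h]; exact hla1
        · rw [la_concat_lt u x h]; omega
      · rcases le_or_gt (lv u) x with h | h
        · rw [la_concat_ge u x h, hlv']; omega
        · rw [la_concat_lt u x h, hlv']
      · intro hd
        rw [hlv', hbb] at hd
        rw [la_concat_lt u x hd, hlv']
      · -- MaxRS
        rcases le_or_gt (lv u) x with h | h
        · refine ⟨i₀, ?_, ?_, ?_⟩
          · obtain ⟨hi₀l, hi₀⟩ := hrs
            refine ⟨by simp; omega, ?_⟩
            rcases hi₀ with h0 | h0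
            · exact Or.inl h0
            · right
              rw [getD_concat_lt u x i₀ hi₀l, getD_concat_lt u x (i₀-1) (by omega)]
              exact h0
          · rw [getD_concat_lt u x i₀ hrs.1, la_concat_ge u x h, hgd]
          · intro i hi
            obtain ⟨hil, hi2⟩ := hi
            have hile : i ≤ u.length := by simp at hil; omega
            rcases Nat.eq_or_lt_of_le hile with he | hlt
            · -- i = u.length : contradiction with x ≥ lv u
              exfalso
              rcases hi2 with h0 | h0
              · omega
              · rw [he, getD_concat_self] at h0
                have h2 : (u ++ [x]).getD (u.length - 1) 0 = u.getD (u.length - 1) 0 :=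
                  getD_concat_lt u x _ (by omega)
                rw [h2] at h0
                rw [show n - 1 = u.length - 1 by omega] at hlvD
                omega
            · exact hmax i ⟨hlt, by
                rcases hi2 with h0 | h0
                · exact Or.inl h0
                · right
                  rw [getD_concat_lt u x i hlt, getD_concat_lt u x (i-1) (by omega)] at h0
                  exact h0⟩
        · -- descent: new run start at u.length
          refine ⟨u.length, ⟨by simp, Or.inr ?_⟩, ?_, ?_⟩
          · rw [getD_concat_self, getD_concat_lt u x _ (by omega)]
            rw [show n - 1 = u.length - 1 by omega] at hlvD
            omega
          · rw [getD_concat_self, la_concat_lt u x h]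
          · intro i hi
            have := hi.1
            simp at this
            omega
lemma runStart_concat_lt (w : List ℕ) (x : ℕ) (i : ℕ) (hi : i < w.length) :
    RunStart (w ++ [x]) i ↔ RunStart w i := by
  unfold RunStart
  rw [getD_concat_lt w x i hi, getD_concat_lt w x (i-1) (by omega)]
  simp only [List.length_append, List.length_cons, List.length_nil]
  constructor
  · rintro ⟨-, h⟩; exact ⟨hi, h⟩
  · rintro ⟨-, h⟩; exact ⟨by omega, h⟩

lemma runStart_concat_self (w : List ℕ) (x : ℕ) (hw : 1 ≤ w.length) :
    RunStart (w ++ [x]) w.length ↔ x < w.getD (w.length - 1) 0 := by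
  unfold RunStart
  rw [getD_concat_self, getD_concat_lt w x (w.length - 1) (by omega)]
  simp only [List.length_append, List.length_cons, List.length_nil]
  constructor
  · rintro ⟨-, h⟩
    rcases h with h | h
    · omega
    · exact h
  · intro h
    exact ⟨by omega, Or.inr h⟩

lemma catalan_concat (w : List ℕ) (x : ℕ) (hw : 1 ≤ w.length) :
    IsCatalan (w ++ [x]) ↔ IsCatalan w ∧ 1 ≤ x ∧ x ≤ w.getD (w.length - 1) 0 + 1 := by
  unfold IsCatalan
  have hne : w ≠ [] := by intro h; simp [h] at hw
  have hd0 : (w ++ [x]).getD 0 0 = w.getD 0 0 := getD_concat_lt w x 0 (by omega)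
  simp only [List.length_append, List.length_cons, List.length_nil, hd0]
  constructor
  · rintro ⟨-, h1, h2⟩
    refine ⟨⟨hne, h1, ?_⟩, ?_, ?_⟩
    · intro i hi
      have := h2 i (by omega)
      rwa [getD_concat_lt w x (i+1) (by omega), getD_concat_lt w x i (by omega)] at this
    · have := h2 (w.length - 1) (by omega)
      rw [show w.length - 1 + 1 = w.length by omega, getD_concat_self] at this
      exact this.1
    · have := h2 (w.length - 1) (by omega)
      rw [show w.length - 1 + 1 = w.length by omega, getD_concat_self,
        getD_concat_lt w x (w.length - 1) (by omega)] at this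
      exact this.2
  · rintro ⟨⟨-, h1, h2⟩, hx1, hx2⟩
    refine ⟨by simp, h1, ?_⟩
    intro i hi
    rcases lt_or_ge (i+1) w.length with h | h
    · rw [getD_concat_lt w x (i+1) h, getD_concat_lt w x i (by omega)]
      exact h2 i h
    · have hieq : i + 1 = w.length := by omega
      rw [hieq, getD_concat_self, show i = w.length - 1 by omega,
        getD_concat_lt w x (w.length - 1) (by omega)]
      exact ⟨hx1, hx2⟩

lemma flat_prefix (w : List ℕ) (x : ℕ) (h : IsFlattened (w ++ [x])) :
    IsFlattened w := by
  intro i j hi hj hij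
  have hiw := hi.1
  have hjw := hj.1
  have := h i j ((runStart_concat_lt w x i hiw).mpr hi)
    ((runStart_concat_lt w x j hjw).mpr hj) hij
  rwa [getD_concat_lt w x i hiw, getD_concat_lt w x j hjw] at this

lemma FlatCat_eq : ∀ n, FlatCat n = ↑(FC n) := by
  intro n
  induction n with
  | zero =>
    ext w
    simp only [FlatCat, Set.mem_setOf_eq, FC, Finset.coe_empty, Set.mem_empty_iff_false,
      iff_false, not_and]
    intro hl hc
    exact absurd (List.length_eq_zero_iff.mp hl) hc.1
  | succ n ih =>
    rcases Nat.eq_zero_or_pos n with rfl | hn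
    · -- n+1 = 1
      ext w
      simp only [FlatCat, Set.mem_setOf_eq, FC, Finset.coe_singleton, Set.mem_singleton_iff]
      constructor
      · rintro ⟨hl, ⟨-, hc1, -⟩, -⟩
        match w, hl with
        | [y], _ =>
          simp only [List.getD_cons_zero] at hc1
          rw [hc1]
      · rintro rfl
        refine ⟨rfl, ⟨by simp, rfl, by intro i hi; simp at hi⟩, ?_⟩
        intro i j hi hj hij
        have hi1 : i < 1 := hi.1
        have hj1 : j < 1 := hj.1
        interval_cases i
        interval_cases j
        exact le_rfl
    · -- n ≥ 1
      ext w
      rw [FC_succ n hn]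
      simp only [Finset.coe_biUnion, Set.mem_iUnion, Finset.mem_coe, Finset.mem_image,
        Finset.mem_biUnion]
      constructor
      · -- hard direction
        rintro ⟨hl, hcat, hflat⟩
        have hne : w ≠ [] := by intro h; rw [h] at hl; simp at hl
        obtain ⟨u, x, rfl⟩ : ∃ u x, w = u ++ [x] :=
          ⟨w.dropLast, w.getLast hne, (List.dropLast_append_getLast hne).symm⟩
        have hul : u.length = n := by
          have := hl
          simp at this
          omega
        have hul1 : 1 ≤ u.length := by omega
        have hucat : IsCatalan u := by
          rw [catalan_concat u x hul1] at hcat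
          exact hcat.1
        have huflat : IsFlattened u := flat_prefix u x hflat
        have huFC : u ∈ FC n := by
          have : u ∈ FlatCat n := ⟨hul, hucat, huflat⟩
          rwa [ih] at this
        obtain ⟨hlen, hla1, hlav, hlvD, hdesc, i₀, hrs, hgd, hmax⟩ := FC_inv n hn u huFC
        rw [catalan_concat u x hul1] at hcat
        have hlvg : lv u = u.getD (u.length - 1) 0 := by
          rw [hlvD]; congr 2; omega
        refine ⟨u, huFC, ?_⟩
        refine ⟨x, ?_, rfl⟩
        simp only [exts, Finset.mem_Icc]
        constructor
        · -- la u ≤ x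
          rcases le_or_gt (lv u) x with h | h
          · omega
          · -- new run start at u.length
            have hrsx : RunStart (u ++ [x]) u.length := by
              rw [runStart_concat_self u x hul1, ← hlvg]; exact h
            have hrsi₀ : RunStart (u ++ [x]) i₀ := (runStart_concat_lt u x i₀ hrs.1).mpr hrs
            have := hflat i₀ u.length hrsi₀ hrsx (Nat.le_of_lt hrs.1)
            rw [getD_concat_lt u x i₀ hrs.1, getD_concat_self, hgd] at this
            exact this
        · rw [← hlvg] at hcat
          omega
      · -- easy direction
        rintro ⟨u, huFC, x, hx, rfl⟩
        obtain ⟨hlen, hla1, hlav, hlvD, hdesc, i₀, hrs, hgd, hmax⟩ := FC_inv n hn u huFC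
        have hu : u ∈ FlatCat n := by rw [ih]; exact huFC
        obtain ⟨hul, hucat, huflat⟩ := hu
        have hul1 : 1 ≤ u.length := by omega
        simp only [exts, Finset.mem_Icc] at hx
        have hlvg : lv u = u.getD (u.length - 1) 0 := by
          rw [hlvD]; congr 2; omega
        refine ⟨by simp; omega, ?_, ?_⟩
        · rw [catalan_concat u x hul1, ← hlvg]
          exact ⟨hucat, by omega, by omega⟩
        · -- flattened
          intro i j hi hj hij
          have hjl : j < u.length + 1 := by
            have := hj.1; simpa using this
          have hil : i < u.length + 1 := by
            have := hi.1; simpa using this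
          rcases Nat.eq_or_lt_of_le (Nat.lt_succ_iff.mp hjl) with hje | hjlt
          · -- j = u.length
            rcases Nat.eq_or_lt_of_le (Nat.lt_succ_iff.mp hil) with hie | hilt
            · rw [hie, hje]
            · -- i < u.length, j = u.length
              have hrsi : RunStart u i := (runStart_concat_lt u x i hilt).mp hi
              have hxlt : x < lv u := by
                have := hj
                rw [hje, runStart_concat_self u x hul1, ← hlvg] at this
                exact this
              have h1 : u.getD i 0 ≤ u.getD i₀ 0 := huflat i i₀ hrsi hrs (hmax i hrsi)
              rw [getD_concat_lt u x i hilt, hje, getD_concat_self]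
              omega
          · -- j < u.length
            have hrsj : RunStart u j := (runStart_concat_lt u x j hjlt).mp hj
            have hilt : i < u.length := by omega
            have hrsi : RunStart u i := (runStart_concat_lt u x i hilt).mp hi
            rw [getD_concat_lt u x i hilt, getD_concat_lt u x j hjlt]
            exact huflat i j hrsi hrsj hij
lemma occ_finite (τ w : List ℕ) : {i | OccAt τ w i}.Finite := by
  apply Set.Finite.subset (Set.finite_Iic w.length)
  intro i hi
  have h1 := hi.1
  simp only [Set.mem_Iic]
  omega

lemma numOcc_short (τ w : List ℕ) (hτ : τ.length = 3) (hw : w.length ≤ 2) :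
    numOcc τ w = 0 := by
  unfold numOcc
  convert Set.ncard_empty ℕ
  ext i
  simp only [Set.mem_setOf_eq, Set.mem_empty_iff_false, iff_false]
  intro h
  have := h.1
  omega

lemma occAt_append_old (τ w : List ℕ) (x : ℕ) (i : ℕ) (h : i + τ.length ≤ w.length) :
    OccAt τ (w ++ [x]) i ↔ OccAt τ w i := by
  unfold OccAt
  have hg : ∀ s < τ.length, (w ++ [x]).getD (i + s) 0 = w.getD (i + s) 0 := by
    intro s hs
    exact getD_concat_lt w x (i+s) (by omega)
  constructor
  · rintro ⟨-, h2⟩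
    refine ⟨h, ?_⟩
    intro s hs t ht
    rw [← hg s hs, ← hg t ht]
    exact h2 s hs t ht
  · rintro ⟨-, h2⟩
    refine ⟨by simp; omega, ?_⟩
    intro s hs t ht
    rw [hg s hs, hg t ht]
    exact h2 s hs t ht

lemma occ_set_concat (τ w : List ℕ) (x : ℕ) (hτ : τ.length = 3) (hw : 2 ≤ w.length) :
    {i | OccAt τ (w ++ [x]) i}
      = {i | OccAt τ w i} ∪ {i | i = w.length - 2 ∧ OccAt τ (w ++ [x]) i} := by
  ext i
  simp only [Set.mem_setOf_eq, Set.mem_union]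
  constructor
  · intro h
    have h1 := h.1
    simp only [List.length_append, List.length_cons, List.length_nil, hτ] at h1
    rcases lt_or_ge (i + 3) (w.length + 1) with hc | hc
    · left
      exact (occAt_append_old τ w x i (by omega)).mp h
    · right
      exact ⟨by omega, h⟩
  · intro h
    rcases h with h | h
    · have h1 := h.1
      rw [hτ] at h1
      exact (occAt_append_old τ w x i (by omega)).mpr h
    · exact h.2

lemma numOcc_concat (τ w : List ℕ) (x : ℕ) (hτ : τ.length = 3) (hw : 2 ≤ w.length)
    (C : Prop) [Decidable C] (hC : C ↔ OccAt τ (w ++ [x]) (w.length - 2)) :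
    numOcc τ (w ++ [x]) = numOcc τ w + (if C then 1 else 0) := by
  unfold numOcc
  rw [occ_set_concat τ w x hτ hw]
  rw [Set.ncard_union_eq ?dis (occ_finite τ w)
    (Set.Finite.subset (Set.finite_singleton (w.length - 2)) (by intro i hi; exact hi.1))]
  case dis =>
    rw [Set.disjoint_left]
    rintro i hi ⟨rfl, -⟩
    have := hi.1
    omega
  congr 1
  by_cases h : C
  · rw [if_pos h]
    rw [show {i | i = w.length - 2 ∧ OccAt τ (w ++ [x]) i} = {w.length - 2} from ?_]
    · exact Set.ncard_singleton _
    · ext i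
      simp only [Set.mem_setOf_eq, Set.mem_singleton_iff]
      constructor
      · rintro ⟨rfl, -⟩; rfl
      · rintro rfl; exact ⟨rfl, hC.mp h⟩
  · rw [if_neg h]
    rw [show {i | i = w.length - 2 ∧ OccAt τ (w ++ [x]) i} = (∅ : Set ℕ) from ?_]
    · exact Set.ncard_empty ℕ
    · ext i
      simp only [Set.mem_setOf_eq, Set.mem_empty_iff_false, iff_false, not_and]
      rintro rfl hocc
      exact h (hC.mpr hocc)

lemma occAt_tail3 (τ w : List ℕ) (x : ℕ) (hτ : τ.length = 3) (hw : 2 ≤ w.length)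
    (hlvg : lv w = w.getD (w.length - 1) 0) :
    OccAt τ (w ++ [x]) (w.length - 2) ↔
      ((lv w < bb w ↔ τ.getD 1 0 < τ.getD 0 0) ∧
       (bb w < lv w ↔ τ.getD 0 0 < τ.getD 1 0) ∧
       (lv w < x ↔ τ.getD 1 0 < τ.getD 2 0) ∧
       (x < lv w ↔ τ.getD 2 0 < τ.getD 1 0) ∧
       (bb w < x ↔ τ.getD 0 0 < τ.getD 2 0) ∧
       (x < bb w ↔ τ.getD 2 0 < τ.getD 0 0)) := by
  unfold OccAt
  rw [hτ]
  have e0 : (w ++ [x]).getD (w.length - 2 + 0) 0 = bb w := by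
    rw [Nat.add_zero, getD_concat_lt w x _ (by omega)]; rfl
  have e1 : (w ++ [x]).getD (w.length - 2 + 1) 0 = lv w := by
    rw [getD_concat_lt w x _ (by omega), hlvg]
    congr 1
    omega
  have e2 : (w ++ [x]).getD (w.length - 2 + 2) 0 = x := by
    rw [show w.length - 2 + 2 = w.length by omega, getD_concat_self]
  constructor
  · rintro ⟨-, h⟩
    have h10 := h 1 (by omega) 0 (by omega)
    have h01 := h 0 (by omega) 1 (by omega)
    have h12 := h 1 (by omega) 2 (by omega)
    have h21 := h 2 (by omega) 1 (by omega)
    have h02 := h 0 (by omega) 2 (by omega)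
    have h20 := h 2 (by omega) 0 (by omega)
    rw [e0, e1] at h10 h01
    rw [e1, e2] at h12 h21
    rw [e0, e2] at h02 h20
    exact ⟨h10, h01, h12, h21, h02, h20⟩
  · rintro ⟨h10, h01, h12, h21, h02, h20⟩
    refine ⟨by simp; omega, ?_⟩
    intro s hs t ht
    interval_cases s <;> interval_cases t <;>
      simp only [e0, e1, e2] <;> first
        | exact h10 | exact h01 | exact h12 | exact h21 | exact h02 | exact h20
        | simp
lemma numOcc_concat_212 (w : List ℕ) (x : ℕ) (hw : 2 ≤ w.length)
    (hlvg : lv w = w.getD (w.length - 1) 0) :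
    numOcc [2,1,2] (w ++ [x])
      = numOcc [2,1,2] w + (if lv w < bb w ∧ lv w < x ∧ bb w = x then 1 else 0) := by
  apply numOcc_concat _ _ _ (by rfl) hw
  rw [occAt_tail3 [2,1,2] w x rfl hw hlvg]
  simp only [List.getD_cons_zero, List.getD_cons_succ]
  omega

lemma numOcc_concat_312 (w : List ℕ) (x : ℕ) (hw : 2 ≤ w.length)
    (hlvg : lv w = w.getD (w.length - 1) 0) :
    numOcc [3,1,2] (w ++ [x])
      = numOcc [3,1,2] w + (if lv w < bb w ∧ lv w < x ∧ x < bb w then 1 else 0) := by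
  apply numOcc_concat _ _ _ (by rfl) hw
  rw [occAt_tail3 [3,1,2] w x rfl hw hlvg]
  simp only [List.getD_cons_zero, List.getD_cons_succ]
  omega
lemma sum_FC_succ {M : Type*} [AddCommMonoid M] (n : ℕ) (hn : 1 ≤ n) (F : List ℕ → M) :
    ∑ w ∈ FC (n+1), F w = ∑ w ∈ FC n, ∑ x ∈ exts w, F (w ++ [x]) := by
  rw [FC_succ n hn]
  rw [Finset.sum_biUnion]
  · apply Finset.sum_congr rfl
    intro w _
    apply Finset.sum_image
    intro x _ y _ h
    simpa using h
  · intro w _ w' _ hne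
    simp only [Function.onFun]
    rw [Finset.disjoint_left]
    intro u hu hu'
    simp only [Finset.mem_image] at hu hu'
    obtain ⟨x, -, rfl⟩ := hu
    obtain ⟨y, -, he⟩ := hu'
    apply hne
    have h2 := congrArg List.dropLast he
    rw [List.dropLast_concat, List.dropLast_concat] at h2
    exact h2.symm

lemma FC_facts (n : ℕ) (hn : 2 ≤ n) (w : List ℕ) (hw : w ∈ FC n) :
    2 ≤ w.length ∧ 1 ≤ la w ∧ la w ≤ lv w ∧ lv w = w.getD (w.length - 1) 0 ∧
      (lv w < bb w → la w = lv w) := by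
  obtain ⟨hlen, h1, hav, hlvD, hdesc, -⟩ := FC_inv n (by omega) w hw
  refine ⟨by omega, h1, hav, ?_, hdesc⟩
  rw [hlen]
  exact hlvD

lemma dd_concat_lt (w : List ℕ) (x : ℕ) (h : x < lv w) : dd (w ++ [x]) = 0 := by
  unfold dd
  rw [lv_concat, la_concat_lt w x h]
  omega

lemma dd_concat_ge (w : List ℕ) (x : ℕ) (h : lv w ≤ x) : dd (w ++ [x]) = x - la w := by
  unfold dd
  rw [lv_concat, la_concat_ge w x h]

lemma exts_eq (w : List ℕ) (h1 : 1 ≤ la w) (hav : la w ≤ lv w) :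
    exts w = insert (lv w + 1) (insert (lv w) (Finset.Icc (la w) (lv w - 1))) := by
  ext y
  simp only [exts, Finset.mem_Icc, Finset.mem_insert]
  omega

lemma sum_exts {M : Type*} [AddCommMonoid M] (w : List ℕ) (h1 : 1 ≤ la w)
    (hav : la w ≤ lv w) (f : ℕ → M) :
    ∑ x ∈ exts w, f x
      = (∑ x ∈ Finset.Icc (la w) (lv w - 1), f x) + f (lv w) + f (lv w + 1) := by
  rw [exts_eq w h1 hav, Finset.sum_insert (by simp [Finset.mem_Icc]),
    Finset.sum_insert (by simp [Finset.mem_Icc]; omega)]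
  abel

lemma exts_card (w : List ℕ) (hav : la w ≤ lv w) : (exts w).card = dd w + 2 := by
  rw [exts, Nat.card_Icc]
  simp only [dd]
  omega

lemma inner_one (w : List ℕ) (hav : la w ≤ lv w) :
    ∑ x ∈ exts w, 1 = dd w + 2 := by
  rw [Finset.sum_const, smul_eq_mul, mul_one, exts_card w hav]

lemma inner_dd (w : List ℕ) (h1 : 1 ≤ la w) (hav : la w ≤ lv w) :
    ∑ x ∈ exts w, dd (w ++ [x]) = 2 * dd w + 1 := by
  rw [sum_exts w h1 hav]
  have hz : ∑ x ∈ Finset.Icc (la w) (lv w - 1), dd (w ++ [x]) = 0 := by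
    apply Finset.sum_eq_zero
    intro x hx
    simp only [Finset.mem_Icc] at hx
    exact dd_concat_lt w x (by omega)
  rw [hz, dd_concat_ge w (lv w) le_rfl, dd_concat_ge w (lv w + 1) (by omega), dd]
  omega

lemma inner_zero (w : List ℕ) (h1 : 1 ≤ la w) (hav : la w ≤ lv w) :
    ∑ x ∈ exts w, (if dd (w ++ [x]) = 0 then 1 else 0)
      = dd w + (if dd w = 0 then 1 else 0) := by
  rw [sum_exts w h1 hav]
  have hz : ∑ x ∈ Finset.Icc (la w) (lv w - 1), (if dd (w ++ [x]) = 0 then 1 else 0)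
      = dd w := by
    rw [Finset.sum_congr rfl (fun x hx => ?_), Finset.sum_const, smul_eq_mul, mul_one,
      Nat.card_Icc]
    · simp only [dd]; omega
    · simp only [Finset.mem_Icc] at hx
      rw [if_pos (dd_concat_lt w x (by omega))]
  rw [hz, dd_concat_ge w (lv w) le_rfl, dd_concat_ge w (lv w + 1) (by omega)]
  rw [dd]
  split_ifs <;> omega

lemma bb_concat' (w : List ℕ) (x : ℕ) (hw2 : 2 ≤ w.length)
    (hlvg : lv w = w.getD (w.length - 1) 0) : bb (w ++ [x]) = lv w := by
  rw [bb_concat w x (by omega), hlvg]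

lemma inner_d1 (w : List ℕ) (h1 : 1 ≤ la w) (hav : la w ≤ lv w) (hw2 : 2 ≤ w.length)
    (hlvg : lv w = w.getD (w.length - 1) 0) :
    ∑ x ∈ exts w, (if bb (w ++ [x]) = lv (w ++ [x]) + 1 then 1 else 0)
      = (if la w < lv w then 1 else 0) := by
  have step : ∀ x, (if bb (w ++ [x]) = lv (w ++ [x]) + 1 then (1:ℕ) else 0)
      = (if x = lv w - 1 then 1 else 0) := by
    intro x
    rw [bb_concat' w x hw2 hlvg, lv_concat]
    apply if_congr _ rfl rfl
    omega
  rw [Finset.sum_congr rfl (fun x _ => step x), Finset.sum_ite_eq' (exts w) (lv w - 1)]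
  simp only [exts, Finset.mem_Icc]
  apply if_congr _ rfl rfl
  omega

lemma inner_d2 (w : List ℕ) (h1 : 1 ≤ la w) (hav : la w ≤ lv w) (hw2 : 2 ≤ w.length)
    (hlvg : lv w = w.getD (w.length - 1) 0) :
    ∑ x ∈ exts w, (if lv (w ++ [x]) + 2 ≤ bb (w ++ [x]) then 1 else 0)
      = dd w - 1 := by
  have step : ∀ x, (if lv (w ++ [x]) + 2 ≤ bb (w ++ [x]) then (1:ℕ) else 0)
      = (if x + 2 ≤ lv w then 1 else 0) := by
    intro x
    rw [bb_concat' w x hw2 hlvg, lv_concat]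
  rw [Finset.sum_congr rfl (fun x _ => step x), ← Finset.card_filter]
  have : (exts w).filter (fun x => x + 2 ≤ lv w) = Finset.Icc (la w) (lv w - 2) := by
    ext y
    simp only [Finset.mem_filter, exts, Finset.mem_Icc]
    omega
  rw [this, Nat.card_Icc, dd]
  omega

lemma inner_o212 (w : List ℕ) (h1 : 1 ≤ la w) (hav : la w ≤ lv w) (hw2 : 2 ≤ w.length)
    (hlvg : lv w = w.getD (w.length - 1) 0) :
    ∑ x ∈ exts w, numOcc [2,1,2] (w ++ [x])
      = (dd w + 2) * numOcc [2,1,2] w + (if bb w = lv w + 1 then 1 else 0) := by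
  rw [Finset.sum_congr rfl (fun x _ => numOcc_concat_212 w x hw2 hlvg),
    Finset.sum_add_distrib, Finset.sum_const, smul_eq_mul, exts_card w hav]
  congr 1
  have step : ∀ x ∈ exts w,
      (if lv w < bb w ∧ lv w < x ∧ bb w = x then (1:ℕ) else 0)
        = (if x = lv w + 1 then (if bb w = lv w + 1 then 1 else 0) else 0) := by
    intro x hx
    simp only [exts, Finset.mem_Icc] at hx
    split_ifs <;> omega
  rw [Finset.sum_congr rfl step, Finset.sum_ite_eq' (exts w) (lv w + 1)]
  rw [if_pos (by simp only [exts, Finset.mem_Icc]; omega)]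

lemma inner_o312 (w : List ℕ) (h1 : 1 ≤ la w) (hav : la w ≤ lv w) (hw2 : 2 ≤ w.length)
    (hlvg : lv w = w.getD (w.length - 1) 0) :
    ∑ x ∈ exts w, numOcc [3,1,2] (w ++ [x])
      = (dd w + 2) * numOcc [3,1,2] w + (if lv w + 2 ≤ bb w then 1 else 0) := by
  rw [Finset.sum_congr rfl (fun x _ => numOcc_concat_312 w x hw2 hlvg),
    Finset.sum_add_distrib, Finset.sum_const, smul_eq_mul, exts_card w hav]
  congr 1
  have step : ∀ x ∈ exts w,
      (if lv w < bb w ∧ lv w < x ∧ x < bb w then (1:ℕ) else 0)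
        = (if x = lv w + 1 then (if lv w + 2 ≤ bb w then 1 else 0) else 0) := by
    intro x hx
    simp only [exts, Finset.mem_Icc] at hx
    split_ifs <;> omega
  rw [Finset.sum_congr rfl step, Finset.sum_ite_eq' (exts w) (lv w + 1)]
  rw [if_pos (by simp only [exts, Finset.mem_Icc]; omega)]

lemma inner_o212d (w : List ℕ) (h1 : 1 ≤ la w) (hav : la w ≤ lv w) (hw2 : 2 ≤ w.length)
    (hlvg : lv w = w.getD (w.length - 1) 0) (hdesc : lv w < bb w → la w = lv w) :
    ∑ x ∈ exts w, numOcc [2,1,2] (w ++ [x]) * dd (w ++ [x])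
      = numOcc [2,1,2] w * (2 * dd w + 1) + (if bb w = lv w + 1 then 1 else 0) := by
  have step : ∀ x ∈ exts w, numOcc [2,1,2] (w ++ [x]) * dd (w ++ [x])
      = numOcc [2,1,2] w * dd (w ++ [x])
        + (if x = lv w + 1 then (if bb w = lv w + 1 then 1 else 0) else 0) := by
    intro x hx
    simp only [exts, Finset.mem_Icc] at hx
    rw [numOcc_concat_212 w x hw2 hlvg, add_mul]
    congr 1
    by_cases hC : lv w < bb w ∧ lv w < x ∧ bb w = x
    · have ha : la w = lv w := hdesc hC.1
      rw [if_pos hC, one_mul, dd_concat_ge w x (by omega)]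
      rw [if_pos (by omega), if_pos (by omega)]
      omega
    · rw [if_neg hC, zero_mul]
      by_cases hx2 : x = lv w + 1
      · rw [if_pos hx2, if_neg (by omega)]
      · rw [if_neg hx2]
  rw [Finset.sum_congr rfl step, Finset.sum_add_distrib, ← Finset.mul_sum,
    inner_dd w h1 hav, Finset.sum_ite_eq' (exts w) (lv w + 1),
    if_pos (by simp only [exts, Finset.mem_Icc]; omega)]

lemma inner_o312d (w : List ℕ) (h1 : 1 ≤ la w) (hav : la w ≤ lv w) (hw2 : 2 ≤ w.length)
    (hlvg : lv w = w.getD (w.length - 1) 0) (hdesc : lv w < bb w → la w = lv w) :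
    ∑ x ∈ exts w, numOcc [3,1,2] (w ++ [x]) * dd (w ++ [x])
      = numOcc [3,1,2] w * (2 * dd w + 1) + (if lv w + 2 ≤ bb w then 1 else 0) := by
  have step : ∀ x ∈ exts w, numOcc [3,1,2] (w ++ [x]) * dd (w ++ [x])
      = numOcc [3,1,2] w * dd (w ++ [x])
        + (if x = lv w + 1 then (if lv w + 2 ≤ bb w then 1 else 0) else 0) := by
    intro x hx
    simp only [exts, Finset.mem_Icc] at hx
    rw [numOcc_concat_312 w x hw2 hlvg, add_mul]
    congr 1
    by_cases hC : lv w < bb w ∧ lv w < x ∧ x < bb w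
    · have ha : la w = lv w := hdesc hC.1
      rw [if_pos hC, one_mul, dd_concat_ge w x (by omega)]
      rw [if_pos (by omega), if_pos (by omega)]
      omega
    · rw [if_neg hC, zero_mul]
      by_cases hx2 : x = lv w + 1
      · rw [if_pos hx2, if_neg (by omega)]
      · rw [if_neg hx2]
  rw [Finset.sum_congr rfl step, Finset.sum_add_distrib, ← Finset.mul_sum,
    inner_dd w h1 hav, Finset.sum_ite_eq' (exts w) (lv w + 1),
    if_pos (by simp only [exts, Finset.mem_Icc]; omega)]
def Tn (n : ℕ) : ℕ := (FC n).card
def Sn (n : ℕ) : ℕ := ∑ w ∈ FC n, dd w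
def Zn (n : ℕ) : ℕ := ∑ w ∈ FC n, (if dd w = 0 then 1 else 0)
def D1n (n : ℕ) : ℕ := ∑ w ∈ FC n, (if bb w = lv w + 1 then 1 else 0)
def D2n (n : ℕ) : ℕ := ∑ w ∈ FC n, (if lv w + 2 ≤ bb w then 1 else 0)
noncomputable def On (n : ℕ) : ℕ := ∑ w ∈ FC n, numOcc [2,1,2] w
noncomputable def Pn (n : ℕ) : ℕ := ∑ w ∈ FC n, numOcc [2,1,2] w * dd w
noncomputable def On' (n : ℕ) : ℕ := ∑ w ∈ FC n, numOcc [3,1,2] w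
noncomputable def Pn' (n : ℕ) : ℕ := ∑ w ∈ FC n, numOcc [3,1,2] w * dd w

lemma step_T (n : ℕ) (hn : 2 ≤ n) : Tn (n+1) = Sn n + 2 * Tn n := by
  unfold Tn Sn
  rw [Finset.card_eq_sum_ones, sum_FC_succ n (by omega)]
  have hinner : ∀ w ∈ FC n, (∑ _x ∈ exts w, (1:ℕ)) = dd w + 2 := fun w hw =>
    inner_one w (FC_facts n hn w hw).2.2.1
  rw [Finset.sum_congr rfl hinner, Finset.sum_add_distrib, Finset.sum_const, smul_eq_mul,
    Finset.card_eq_sum_ones]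
  omega

lemma step_S (n : ℕ) (hn : 2 ≤ n) : Sn (n+1) = 2 * Sn n + Tn n := by
  unfold Sn Tn
  rw [sum_FC_succ n (by omega)]
  have hinner : ∀ w ∈ FC n, (∑ x ∈ exts w, dd (w ++ [x])) = 2 * dd w + 1 := fun w hw =>
    inner_dd w (FC_facts n hn w hw).2.1 (FC_facts n hn w hw).2.2.1
  rw [Finset.sum_congr rfl hinner, Finset.sum_add_distrib, Finset.sum_const, smul_eq_mul,
    mul_one, ← Finset.mul_sum]

lemma step_Z (n : ℕ) (hn : 2 ≤ n) : Zn (n+1) = Sn n + Zn n := by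
  unfold Zn Sn
  rw [sum_FC_succ n (by omega)]
  have hinner : ∀ w ∈ FC n, (∑ x ∈ exts w, if dd (w ++ [x]) = 0 then 1 else 0)
      = dd w + (if dd w = 0 then 1 else 0) := fun w hw =>
    inner_zero w (FC_facts n hn w hw).2.1 (FC_facts n hn w hw).2.2.1
  rw [Finset.sum_congr rfl hinner, Finset.sum_add_distrib]

lemma step_D1 (n : ℕ) (hn : 2 ≤ n) : D1n (n+1) + Zn n = Tn n := by
  unfold D1n Zn Tn
  rw [sum_FC_succ n (by omega)]
  have hinner : ∀ w ∈ FC n, (∑ x ∈ exts w, if bb (w ++ [x]) = lv (w ++ [x]) + 1 then 1 else 0)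
      = (if la w < lv w then 1 else 0) := by
    intro w hw
    obtain ⟨hw2, h1, hav, hlvg, hdesc⟩ := FC_facts n hn w hw
    exact inner_d1 w h1 hav hw2 hlvg
  rw [Finset.sum_congr rfl hinner, ← Finset.sum_add_distrib, Finset.card_eq_sum_ones]
  apply Finset.sum_congr rfl
  intro w hw
  have hav := (FC_facts n hn w hw).2.2.1
  rw [dd]
  split_ifs <;> omega

lemma step_D2 (n : ℕ) (hn : 2 ≤ n) : D2n (n+1) + Tn n = Sn n + Zn n := by
  unfold D2n Zn Tn Sn
  rw [sum_FC_succ n (by omega)]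
  have hinner : ∀ w ∈ FC n, (∑ x ∈ exts w, if lv (w ++ [x]) + 2 ≤ bb (w ++ [x]) then 1 else 0)
      = dd w - 1 := by
    intro w hw
    obtain ⟨hw2, h1, hav, hlvg, hdesc⟩ := FC_facts n hn w hw
    exact inner_d2 w h1 hav hw2 hlvg
  rw [Finset.sum_congr rfl hinner, ← Finset.sum_add_distrib, Finset.card_eq_sum_ones,
    ← Finset.sum_add_distrib]
  apply Finset.sum_congr rfl
  intro w hw
  have hav := (FC_facts n hn w hw).2.2.1
  rw [dd]
  split_ifs <;> omega

lemma step_O (n : ℕ) (hn : 2 ≤ n) : On (n+1) = Pn n + 2 * On n + D1n n := by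
  unfold On Pn D1n
  rw [sum_FC_succ n (by omega)]
  have hinner : ∀ w ∈ FC n, (∑ x ∈ exts w, numOcc [2,1,2] (w ++ [x]))
      = numOcc [2,1,2] w * dd w + 2 * numOcc [2,1,2] w
        + (if bb w = lv w + 1 then 1 else 0) := by
    intro w hw
    obtain ⟨hw2, h1, hav, hlvg, hdesc⟩ := FC_facts n hn w hw
    rw [inner_o212 w h1 hav hw2 hlvg]
    ring_nf
  rw [Finset.sum_congr rfl hinner, Finset.sum_add_distrib, Finset.sum_add_distrib,
    ← Finset.mul_sum]

lemma step_P (n : ℕ) (hn : 2 ≤ n) : Pn (n+1) = 2 * Pn n + On n + D1n n := by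
  unfold On Pn D1n
  rw [sum_FC_succ n (by omega)]
  have hinner : ∀ w ∈ FC n, (∑ x ∈ exts w, numOcc [2,1,2] (w ++ [x]) * dd (w ++ [x]))
      = 2 * (numOcc [2,1,2] w * dd w) + numOcc [2,1,2] w
        + (if bb w = lv w + 1 then 1 else 0) := by
    intro w hw
    obtain ⟨hw2, h1, hav, hlvg, hdesc⟩ := FC_facts n hn w hw
    rw [inner_o212d w h1 hav hw2 hlvg hdesc]
    ring_nf
  rw [Finset.sum_congr rfl hinner, Finset.sum_add_distrib, Finset.sum_add_distrib,
    ← Finset.mul_sum]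

lemma step_O' (n : ℕ) (hn : 2 ≤ n) : On' (n+1) = Pn' n + 2 * On' n + D2n n := by
  unfold On' Pn' D2n
  rw [sum_FC_succ n (by omega)]
  have hinner : ∀ w ∈ FC n, (∑ x ∈ exts w, numOcc [3,1,2] (w ++ [x]))
      = numOcc [3,1,2] w * dd w + 2 * numOcc [3,1,2] w
        + (if lv w + 2 ≤ bb w then 1 else 0) := by
    intro w hw
    obtain ⟨hw2, h1, hav, hlvg, hdesc⟩ := FC_facts n hn w hw
    rw [inner_o312 w h1 hav hw2 hlvg]
    ring_nf
  rw [Finset.sum_congr rfl hinner, Finset.sum_add_distrib, Finset.sum_add_distrib,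
    ← Finset.mul_sum]

lemma step_P' (n : ℕ) (hn : 2 ≤ n) : Pn' (n+1) = 2 * Pn' n + On' n + D2n n := by
  unfold On' Pn' D2n
  rw [sum_FC_succ n (by omega)]
  have hinner : ∀ w ∈ FC n, (∑ x ∈ exts w, numOcc [3,1,2] (w ++ [x]) * dd (w ++ [x]))
      = 2 * (numOcc [3,1,2] w * dd w) + numOcc [3,1,2] w
        + (if lv w + 2 ≤ bb w then 1 else 0) := by
    intro w hw
    obtain ⟨hw2, h1, hav, hlvg, hdesc⟩ := FC_facts n hn w hw
    rw [inner_o312d w h1 hav hw2 hlvg hdesc]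
    ring_nf
  rw [Finset.sum_congr rfl hinner, Finset.sum_add_distrib, Finset.sum_add_distrib,
    ← Finset.mul_sum]
lemma Tn2 : Tn 2 = 2 := by decide
lemma Sn2 : Sn 2 = 1 := by decide
lemma Zn2 : Zn 2 = 1 := by decide
lemma D1n2 : D1n 2 = 0 := by decide
lemma D2n2 : D2n 2 = 0 := by decide

lemma On2 : On 2 = 0 := by
  apply Finset.sum_eq_zero
  intro w hw
  exact numOcc_short _ _ (by rfl) (by rw [(FC_inv 2 (by omega) w hw).1])

lemma Pn2 : Pn 2 = 0 := by
  apply Finset.sum_eq_zero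
  intro w hw
  rw [numOcc_short _ _ (by rfl) (by rw [(FC_inv 2 (by omega) w hw).1]), zero_mul]

lemma On'2 : On' 2 = 0 := by
  apply Finset.sum_eq_zero
  intro w hw
  exact numOcc_short _ _ (by rfl) (by rw [(FC_inv 2 (by omega) w hw).1])

lemma Pn'2 : Pn' 2 = 0 := by
  apply Finset.sum_eq_zero
  intro w hw
  rw [numOcc_short _ _ (by rfl) (by rw [(FC_inv 2 (by omega) w hw).1]), zero_mul]

lemma master (m : ℕ) :
    2 * (Tn (m+2) : ℤ) = 3^(m+1) + 1 ∧
    2 * (Sn (m+2) : ℤ) = 3^(m+1) - 1 ∧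
    4 * (Zn (m+2) : ℤ) = 3^(m+1) + 1 - 2*m ∧
    4 * (D1n (m+2) : ℤ) = 3^m + 2*m - 1 ∧
    4 * (D2n (m+2) : ℤ) = 3^m - 1 - 2*m ∧
    12 * (On (m+2) : ℤ) = m * (3^m - 3) ∧
    12 * (Pn (m+2) : ℤ) = m * (3^m - 3) ∧
    12 * (On' (m+2) : ℤ) = (m - 3) * 3^m + 3*m + 3 ∧
    12 * (Pn' (m+2) : ℤ) = (m - 3) * 3^m + 3*m + 3 := by
  induction m with
  | zero =>
    rw [Tn2, Sn2, Zn2, D1n2, D2n2, On2, Pn2, On'2, Pn'2]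
    norm_num
  | succ m ih =>
    obtain ⟨hT, hS, hZ, hD1, hD2, hO, hP, hO', hP'⟩ := ih
    have h2 : 2 ≤ m + 2 := by omega
    have eT : (Tn (m+3) : ℤ) = (Sn (m+2) : ℤ) + 2 * (Tn (m+2) : ℤ) := by
      exact_mod_cast step_T (m+2) h2
    have eS : (Sn (m+3) : ℤ) = 2 * (Sn (m+2) : ℤ) + (Tn (m+2) : ℤ) := by
      exact_mod_cast step_S (m+2) h2
    have eZ : (Zn (m+3) : ℤ) = (Sn (m+2) : ℤ) + (Zn (m+2) : ℤ) := by
      exact_mod_cast step_Z (m+2) h2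
    have eD1 : (D1n (m+3) : ℤ) + (Zn (m+2) : ℤ) = (Tn (m+2) : ℤ) := by
      exact_mod_cast step_D1 (m+2) h2
    have eD2 : (D2n (m+3) : ℤ) + (Tn (m+2) : ℤ) = (Sn (m+2) : ℤ) + (Zn (m+2) : ℤ) := by
      exact_mod_cast step_D2 (m+2) h2
    have eO : (On (m+3) : ℤ) = (Pn (m+2) : ℤ) + 2 * (On (m+2) : ℤ) + (D1n (m+2) : ℤ) := by
      exact_mod_cast step_O (m+2) h2
    have eP : (Pn (m+3) : ℤ) = 2 * (Pn (m+2) : ℤ) + (On (m+2) : ℤ) + (D1n (m+2) : ℤ) := by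
      exact_mod_cast step_P (m+2) h2
    have eO' : (On' (m+3) : ℤ) = (Pn' (m+2) : ℤ) + 2 * (On' (m+2) : ℤ) + (D2n (m+2) : ℤ) := by
      exact_mod_cast step_O' (m+2) h2
    have eP' : (Pn' (m+3) : ℤ) = 2 * (Pn' (m+2) : ℤ) + (On' (m+2) : ℤ) + (D2n (m+2) : ℤ) := by
      exact_mod_cast step_P' (m+2) h2
    have e3 : m + 1 + 2 = m + 3 := by omega
    rw [e3]
    refine ⟨?_, ?_, ?_, ?_, ?_, ?_, ?_, ?_, ?_⟩ <;> push_cast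
    · linear_combination 2*eT + hS + 2*hT
    · linear_combination 2*eS + 2*hS + hT
    · linear_combination 4*eZ + 2*hS + hZ
    · linear_combination 4*eD1 - hZ + 2*hT
    · linear_combination 4*eD2 + 2*hS + hZ - 2*hT
    · linear_combination 12*eO + hP + 2*hO + 3*hD1
    · linear_combination 12*eP + 2*hP + hO + 3*hD1
    · linear_combination 12*eO' + hP' + 2*hO' + 3*hD2
    · linear_combination 12*eP' + 2*hP' + hO' + 3*hD2
lemma tot_eq (n : ℕ) (τ : List ℕ) : tot n τ = ∑ w ∈ FC n, numOcc τ w := by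
  unfold tot
  rw [FlatCat_eq n]
  exact finsum_mem_coe_finset _ _

theorem tot_212_312' (n : ℕ) (hn : 2 ≤ n) :
    (4 * tot n [2, 1, 2] : ℝ)
      = ((n : ℝ) - 2) * ((3 : ℝ) ^ ((n : ℤ) - 3) - 1) ∧
    (4 * tot n [3, 1, 2] : ℝ)
      = ((n : ℝ) - 5) * (3 : ℝ) ^ ((n : ℤ) - 3) + (n : ℝ) - 1 := by
  obtain ⟨m, rfl⟩ : ∃ m, n = m + 2 := ⟨n - 2, by omega⟩
  have h1 : tot (m+2) [2,1,2] = On (m+2) := tot_eq _ _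
  have h2 : tot (m+2) [3,1,2] = On' (m+2) := tot_eq _ _
  have hO : 12 * ((On (m+2)) : ℝ) = m * (3^m - 3) := by
    exact_mod_cast (master m).2.2.2.2.2.1
  have hO' : 12 * ((On' (m+2)) : ℝ) = ((m:ℝ) - 3) * 3^m + 3*m + 3 := by
    exact_mod_cast (master m).2.2.2.2.2.2.2.1
  have hz : (3:ℝ) ^ (((m+2:ℕ) : ℤ) - 3) = (3:ℝ)^(m:ℕ) / 3 := by
    have he : ((m+2:ℕ) : ℤ) - 3 = (m : ℤ) - 1 := by push_cast; ring
    rw [he, zpow_sub₀ (by norm_num : (3:ℝ) ≠ 0), zpow_natCast, zpow_one]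
  rw [h1, h2, hz]
  constructor
  · push_cast
    linear_combination (1/3 : ℝ) * hO
  · push_cast
    linear_combination (1/3 : ℝ) * hO'

/-- For every `n ≥ 2`: `4·tot_n(212) = (n−2)(3^(n−3) − 1)` and
`4·tot_n(312) = (n−5)·3^(n−3) + n − 1`, as equalities of real numbers (with
integer exponents, so both right-hand sides vanish at `n = 2`). -/
theorem tot_212_312 (n : ℕ) (hn : 2 ≤ n) :
    (4 * tot n [2, 1, 2] : ℝ)
      = ((n : ℝ) - 2) * ((3 : ℝ) ^ ((n : ℤ) - 3) - 1) ∧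
    (4 * tot n [3, 1, 2] : ℝ)
      = ((n : ℝ) - 5) * (3 : ℝ) ^ ((n : ℤ) - 3) + (n : ℝ) - 1 :=
  tot_212_312' n hn
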